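/- Let p be an odd prime and G a powerful finite p-group. Then every element of G^p is a p-th power: G^p = {x^p : x ∈ G}. -/

import Mathlib

open Subgroup Function Pointwise
open scoped commutatorElement

namespace PowerfulAux

variable {G : Type*} [Group G]

/-- `K^p` : the subgroup generated by `p`-th powers of elements of `K`. -/
def pPow (p : ℕ) (K : Subgroup G) : Subgroup G :=
  Subgroup.closure ((fun g => g ^ p) '' (K : Set G))

lemma pPow_mono (p : ℕ) {K K' : Subgroup G} (h : K ≤ K') : pPow p K ≤ pPow p K' :=
  Subgroup.closure_mono (Set.image_mono h)

lemma pPow_le_self (p : ℕ) (K : Subgroup G) : pPow p K ≤ K := by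
  rw [pPow, Subgroup.closure_le]
  rintro x ⟨g, hg, rfl⟩
  exact K.pow_mem hg p

lemma pow_mem_pPow (p : ℕ) {K : Subgroup G} {g : G} (hg : g ∈ K) : g ^ p ∈ pPow p K :=
  Subgroup.subset_closure ⟨g, hg, rfl⟩

lemma map_pPow (p : ℕ) {H : Type*} [Group H] (f : G →* H) (K : Subgroup G) :
    (pPow p K).map f = pPow p (K.map f) := by
  rw [pPow, MonoidHom.map_closure, pPow, Subgroup.coe_map, Set.image_image, Set.image_image]
  congr 1
  exact Set.image_congr fun g _ => map_pow f g p

lemma closure_normal_of_conj {s : Set G} (h : ∀ (g : G), ∀ x ∈ s, g * x * g⁻¹ ∈ s) :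
    (Subgroup.closure s).Normal := by
  constructor
  intro n hn g
  refine Subgroup.closure_induction
    (p := fun x _ => ∀ g : G, g * x * g⁻¹ ∈ Subgroup.closure s) ?_ ?_ ?_ ?_ hn g
  · intro x hx g; exact Subgroup.subset_closure (h g x hx)
  · intro g; simpa using (Subgroup.closure s).one_mem
  · intro x y hx hy ihx ihy g
    have e : g * (x * y) * g⁻¹ = (g * x * g⁻¹) * (g * y * g⁻¹) := by group
    rw [e]; exact mul_mem (ihx g) (ihy g)
  · intro x hx ihx g
    have e : g * x⁻¹ * g⁻¹ = (g * x * g⁻¹)⁻¹ := by group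
    rw [e]; exact inv_mem (ihx g)

lemma pPow_normal (p : ℕ) (K : Subgroup G) (hK : K.Normal) : (pPow p K).Normal := by
  apply closure_normal_of_conj
  rintro g x ⟨k, hk, rfl⟩
  exact ⟨g * k * g⁻¹, hK.conj_mem k hk g, conj_pow⟩

lemma pPow_eq_map (p : ℕ) (K : Subgroup G) :
    pPow p K = (pPow p (⊤ : Subgroup K)).map K.subtype := by
  rw [map_pPow, ← MonoidHom.range_eq_map, Subgroup.range_subtype]

/-- `G` is powerful (for odd `p`): `[G,G] ≤ G^p`. -/
def Powerful (p : ℕ) (G : Type*) [Group G] : Prop :=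
  ⁅(⊤ : Subgroup G), (⊤ : Subgroup G)⁆ ≤ pPow p (⊤ : Subgroup G)

lemma powerful_map (p : ℕ) {H : Type*} [Group H] (f : G →* H) (hf : Surjective f)
    (h : Powerful p G) : Powerful p H := by
  have hmc := Subgroup.map_commutator (H₁ := (⊤ : Subgroup G)) (H₂ := ⊤) f
  rw [Subgroup.map_top_of_surjective f hf] at hmc
  calc ⁅(⊤ : Subgroup H), ⊤⁆ = (⁅(⊤ : Subgroup G), ⊤⁆ : Subgroup G).map f := hmc.symm
    _ ≤ (pPow p (⊤ : Subgroup G)).map f := Subgroup.map_mono h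
    _ = pPow p (⊤ : Subgroup H) := by
        rw [map_pPow, Subgroup.map_top_of_surjective f hf]

lemma commute_of_commutator_le_bot {X : Subgroup G} (h : ⁅X, (⊤ : Subgroup G)⁆ ≤ ⊥)
    {x : G} (hx : x ∈ X) (z : G) : Commute x z := by
  have hb := h (Subgroup.commutator_mem_commutator hx (Subgroup.mem_top z))
  rw [Subgroup.mem_bot] at hb
  exact commutatorElement_eq_one_iff_commute.mp hb

variable {G : Type*} [Group G]

/-- If `y x = c x y` with `c` central-ish (commuting with everything),
then `y * x^n = c^n * x^n * y`. -/
lemma semiconj_pow_right (x y c : G) (hc : ∀ z : G, Commute c z)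
    (hxy : y * x = c * x * y) : ∀ n : ℕ, y * x ^ n = c ^ n * x ^ n * y := by
  intro n
  induction n with
  | zero => simp
  | succ n ih =>
    calc y * x ^ (n + 1) = (y * x ^ n) * x := by rw [pow_succ]; group
      _ = c ^ n * x ^ n * (y * x) := by rw [ih]; group
      _ = c ^ n * x ^ n * (c * x * y) := by rw [hxy]
      _ = c ^ n * (x ^ n * c) * x * y := by group
      _ = c ^ n * (c * x ^ n) * x * y := by rw [(hc (x ^ n)).symm.eq]
      _ = c ^ (n + 1) * x ^ (n + 1) * y := by rw [pow_succ, pow_succ]; group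

lemma semiconj_pow_left (x y c : G) (hc : ∀ z : G, Commute c z)
    (hxy : y * x = c * x * y) : ∀ n : ℕ, y ^ n * x = c ^ n * x * y ^ n := by
  intro n
  induction n with
  | zero => simp
  | succ n ih =>
    calc y ^ (n + 1) * x = y * (y ^ n * x) := by rw [pow_succ']; group
      _ = y * (c ^ n * x * y ^ n) := by rw [ih]
      _ = (y * c ^ n) * x * y ^ n := by group
      _ = (c ^ n * y) * x * y ^ n := by rw [← (hc y).pow_left n]
      _ = c ^ n * (y * x) * y ^ n := by group
      _ = c ^ n * (c * x * y) * y ^ n := by rw [hxy]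
      _ = c ^ (n + 1) * x * y ^ (n + 1) := by rw [pow_succ, pow_succ']; group

lemma mul_pow_formula (x y c : G) (hc : ∀ z : G, Commute c z)
    (hxy : y * x = c * x * y) : ∀ n : ℕ, (x * y) ^ n = c ^ n.choose 2 * x ^ n * y ^ n := by
  intro n
  induction n with
  | zero => simp
  | succ n ih =>
    have hch : (n + 1).choose 2 = n.choose 2 + n := by
      rw [Nat.choose_succ_succ, Nat.choose_one_right, Nat.add_comm]
    calc (x * y) ^ (n + 1) = (x * y) ^ n * (x * y) := by rw [pow_succ]
      _ = c ^ n.choose 2 * x ^ n * ((y ^ n * x) * y) := by rw [ih]; group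
      _ = c ^ n.choose 2 * x ^ n * ((c ^ n * x * y ^ n) * y) := by
          rw [semiconj_pow_left x y c hc hxy n]
      _ = c ^ n.choose 2 * (x ^ n * c ^ n) * x * (y ^ n * y) := by group
      _ = c ^ n.choose 2 * (c ^ n * x ^ n) * x * (y ^ n * y) := by
          rw [((hc (x ^ n)).pow_left n).eq]
      _ = c ^ ((n + 1).choose 2) * x ^ (n + 1) * y ^ (n + 1) := by
          rw [hch, pow_add, pow_succ, pow_succ]; group

/-- If the commutator `⁅y,x⁆` is central and has trivial `p`-th power (`p` odd), then
the `p`-th power map is multiplicative on `x, y`. -/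
lemma mul_pow_of_commutator {p : ℕ} (hodd : Odd p) (x y : G)
    (hc : ∀ z : G, Commute ⁅y, x⁆ z) (hcp : ⁅y, x⁆ ^ p = 1) :
    (x * y) ^ p = x ^ p * y ^ p := by
  obtain ⟨k, hk⟩ := hodd
  have hxy : y * x = ⁅y, x⁆ * x * y := by rw [commutatorElement_def]; group
  have h := mul_pow_formula x y _ hc hxy p
  have hchoose : p.choose 2 = p * k := by
    rw [Nat.choose_two_right]
    have h1 : p - 1 = 2 * k := by omega
    rw [h1]
    have h2 : p * (2 * k) = 2 * (p * k) := by ring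
    rw [h2, Nat.mul_div_cancel_left _ (by norm_num)]
  rw [h, hchoose, pow_mul, hcp, one_pow, one_mul]

/-- Key commutator computation: if `d := ⁅a,⁅a,g⁆⁆` is central, `⁅a,g⁆^p = 1` and `d^p = 1`,
then `a^p` commutes with `g` (`p` odd). -/
lemma commutator_pow_eq_one {p : ℕ} (hodd : Odd p) (a g : G)
    (hd : ∀ z : G, Commute ⁅a, ⁅a, g⁆⁆ z) (hcp : ⁅a, g⁆ ^ p = 1)
    (hdp : ⁅a, ⁅a, g⁆⁆ ^ p = 1) : ⁅a ^ p, g⁆ = 1 := by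
  obtain ⟨k, hk⟩ := hodd
  set c := ⁅a, g⁆ with hc
  set d := ⁅a, c⁆ with hdd
  have hac : a * c = d * c * a := by rw [hdd, commutatorElement_def]; group
  have hag : a * g = c * g * a := by rw [hc, commutatorElement_def]; group
  have key : ∀ n : ℕ, a ^ n * g = c ^ n * d ^ n.choose 2 * g * a ^ n := by
    intro n
    induction n with
    | zero => simp
    | succ n ih =>
      have hch : (n + 1).choose 2 = n.choose 2 + n := by
        rw [Nat.choose_succ_succ, Nat.choose_one_right, Nat.add_comm]
      calc a ^ (n + 1) * g = a * (a ^ n * g) := by rw [pow_succ']; group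
        _ = a * (c ^ n * d ^ n.choose 2 * g * a ^ n) := by rw [ih]
        _ = (a * c ^ n) * d ^ n.choose 2 * g * a ^ n := by group
        _ = (d ^ n * c ^ n * a) * d ^ n.choose 2 * g * a ^ n := by
            rw [semiconj_pow_right c a d hd hac n]
        _ = d ^ n * c ^ n * (a * d ^ n.choose 2) * g * a ^ n := by group
        _ = d ^ n * c ^ n * (d ^ n.choose 2 * a) * g * a ^ n := by
            rw [← ((hd a).pow_left (n.choose 2)).eq]
        _ = d ^ n * c ^ n * d ^ n.choose 2 * (a * g) * a ^ n := by group
        _ = d ^ n * c ^ n * d ^ n.choose 2 * (c * g * a) * a ^ n := by rw [hag]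
        _ = d ^ n * (c ^ n * (d ^ n.choose 2 * c)) * g * a ^ (n + 1) := by
            rw [pow_succ]; group
        _ = d ^ n * (c ^ n * (c * d ^ n.choose 2)) * g * a ^ (n + 1) := by
            rw [((hd c).pow_left (n.choose 2)).eq]
        _ = (d ^ n * c ^ (n + 1)) * d ^ n.choose 2 * g * a ^ (n + 1) := by
            rw [pow_succ]; group
        _ = (c ^ (n + 1) * d ^ n) * d ^ n.choose 2 * g * a ^ (n + 1) := by
            rw [← ((hd (c ^ (n + 1))).pow_left n).eq]
        _ = c ^ (n + 1) * d ^ ((n + 1).choose 2) * g * a ^ (n + 1) := by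
            rw [hch, pow_add]; group
  have hchoose : p.choose 2 = p * k := by
    rw [Nat.choose_two_right]
    have h1 : p - 1 = 2 * k := by omega
    rw [h1]
    have h2 : p * (2 * k) = 2 * (p * k) := by ring
    rw [h2, Nat.mul_div_cancel_left _ (by norm_num)]
  have h := key p
  rw [hcp, hchoose, pow_mul, hdp, one_pow, one_mul, one_mul] at h
  exact commutatorElement_eq_one_iff_commute.mpr h


/-- Lemma A: in a finite `p`-group, a normal subgroup `H` with `H ≤ ⁅H,G⁆ ⊔ H^p` is trivial. -/
lemma eq_bot_of_le_commutator_sup_pPow {p : ℕ} (hp : p.Prime)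
    {G : Type*} [Group G] [Finite G] (hG : IsPGroup p G)
    (H : Subgroup G) (hH : H.Normal)
    (hle : H ≤ ⁅H, (⊤ : Subgroup G)⁆ ⊔ pPow p H) : H = ⊥ := by
  classical
  haveI := hH
  set C := ⁅H, (⊤ : Subgroup G)⁆ with hC
  haveI : C.Normal := Subgroup.commutator_normal H ⊤
  set π := QuotientGroup.mk' C with hπ
  have hsurj : Surjective π := QuotientGroup.mk'_surjective C
  have hmapC : C.map π = ⊥ := by rw [Subgroup.map_eq_bot_iff, QuotientGroup.ker_mk']
  set Hb := H.map π with hHb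
  -- the image of `H` is abelian-ish and satisfies `Hb ≤ Hb^p`
  have h1 : ⁅Hb, (⊤ : Subgroup (G ⧸ C))⁆ ≤ ⊥ := by
    rw [← Subgroup.map_top_of_surjective π hsurj, ← Subgroup.map_commutator, ← hmapC]
  have h2 : Hb ≤ pPow p Hb := by
    calc Hb ≤ (⁅H, (⊤ : Subgroup G)⁆ ⊔ pPow p H).map π := Subgroup.map_mono hle
      _ = C.map π ⊔ (pPow p H).map π := by rw [Subgroup.map_sup]
      _ = ⊥ ⊔ pPow p Hb := by rw [hmapC, map_pPow]
      _ = pPow p Hb := bot_sup_eq _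
  -- commutativity inside Hb
  have hcomm : ∀ x ∈ Hb, ∀ y ∈ Hb, Commute x y := by
    intro x hx y hy
    have hb := h1 (Subgroup.commutator_mem_commutator hx (Subgroup.mem_top y))
    rw [Subgroup.mem_bot] at hb
    exact commutatorElement_eq_one_iff_commute.mp hb
  -- pth powers of Hb form a subgroup
  set T : Subgroup (G ⧸ C) :=
    { carrier := (fun y => y ^ p) '' (Hb : Set (G ⧸ C))
      one_mem' := ⟨1, Hb.one_mem, one_pow p⟩
      mul_mem' := by
        rintro _ _ ⟨a, ha, rfl⟩ ⟨b, hb, rfl⟩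
        exact ⟨a * b, Hb.mul_mem ha hb, by simpa using ((hcomm a ha b hb).mul_pow p)⟩
      inv_mem' := by
        rintro _ ⟨a, ha, rfl⟩
        exact ⟨a⁻¹, Hb.inv_mem ha, by simp [inv_pow]⟩ } with hT
  have hsub : Hb ≤ T := by
    refine le_trans h2 ?_
    rw [pPow, Subgroup.closure_le]
    exact fun x hx => hx
  -- now show Hb = ⊥
  have hHbbot : Hb = ⊥ := by
    by_contra hne
    obtain ⟨ξ, hxne⟩ := (Subgroup.ne_bot_iff_exists_ne_one.mp hne)
    have hPQ : IsPGroup p (G ⧸ C) := hG.to_quotient C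
    have hPHb : IsPGroup p Hb := hPQ.to_subgroup Hb
    -- pth power map on Hb
    set f : Hb → Hb := fun y => ⟨(y : G ⧸ C) ^ p, Hb.pow_mem y.2 p⟩ with hf
    have hfs : Surjective f := by
      intro z
      obtain ⟨w, hw, hwz⟩ := hsub z.2
      exact ⟨⟨w, hw⟩, Subtype.ext hwz⟩
    have hfi : Injective f := (Finite.injective_iff_surjective).mpr hfs
    -- an element of order p
    have hex : ∃ k : ℕ, ξ ^ p ^ k = 1 := hPHb ξ
    set k₀ := Nat.find hex with hk₀
    have hk₀ne : k₀ ≠ 0 := by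
      intro h0
      have := Nat.find_spec hex
      rw [← hk₀] at this
      rw [h0] at this
      simp only [pow_zero, pow_one] at this
      exact hxne this
    set z := ξ ^ p ^ (k₀ - 1) with hz
    have hzp : f z = 1 := by
      have : z ^ p = 1 := by
        rw [hz, ← pow_mul, ← pow_succ]
        have : k₀ - 1 + 1 = k₀ := by omega
        rw [this]
        exact Nat.find_spec hex
      apply Subtype.ext
      exact congrArg Subtype.val this
    have hzo : f 1 = 1 := by
      apply Subtype.ext; simp [hf]
    have : z = 1 := hfi (by rw [hzp, hzo])
    exact Nat.find_min hex (by omega : k₀ - 1 < k₀) this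
  -- conclude H ≤ C, hence H = ⊥ by nilpotency
  have hHC : H ≤ C := by
    rw [hHb, Subgroup.map_eq_bot_iff, QuotientGroup.ker_mk'] at hHbbot
    exact hHbbot
  haveI : Fact p.Prime := ⟨hp⟩
  haveI : Group.IsNilpotent G := hG.isNilpotent
  obtain ⟨n, hn⟩ := _root_.nilpotent_iff_lowerCentralSeries.mp ‹Group.IsNilpotent G›
  have hdesc : ∀ m : ℕ, H ≤ (⊤ : Subgroup G).lowerCentralSeries m := by
    intro m
    induction m with
    | zero => exact le_top
    | succ m ih =>
      calc H ≤ ⁅H, (⊤ : Subgroup G)⁆ := hHC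
        _ ≤ ⁅(⊤ : Subgroup G).lowerCentralSeries m, (⊤ : Subgroup G)⁆ := Subgroup.commutator_mono ih le_rfl
        _ = (⊤ : Subgroup G).lowerCentralSeries (m + 1) := rfl
  rw [← le_bot_iff, ← hn]
  exact hdesc n


/-- Relative version of Lemma A. -/
lemma le_of_le_sup_commutator_sup_pPow {p : ℕ} (hp : p.Prime)
    {G : Type*} [Group G] [Finite G] (hG : IsPGroup p G)
    (H X : Subgroup G) (hH : H.Normal) (hX : X.Normal)
    (hle : H ≤ X ⊔ ⁅H, (⊤ : Subgroup G)⁆ ⊔ pPow p H) : H ≤ X := by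
  haveI := hH; haveI := hX
  set π := QuotientGroup.mk' X with hπ
  have hsurj : Surjective π := QuotientGroup.mk'_surjective X
  have hmapX : X.map π = ⊥ := by rw [Subgroup.map_eq_bot_iff, QuotientGroup.ker_mk']
  have hmain : H.map π = ⊥ := by
    refine eq_bot_of_le_commutator_sup_pPow hp (hG.to_quotient X) (H.map π)
      (hH.map π hsurj) ?_
    calc H.map π ≤ (X ⊔ ⁅H, (⊤ : Subgroup G)⁆ ⊔ pPow p H).map π := Subgroup.map_mono hle
      _ = X.map π ⊔ (⁅H, (⊤ : Subgroup G)⁆).map π ⊔ (pPow p H).map π := by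
          rw [Subgroup.map_sup, Subgroup.map_sup]
      _ = ⊥ ⊔ ⁅H.map π, (⊤ : Subgroup (G ⧸ X))⁆ ⊔ pPow p (H.map π) := by
          rw [hmapX, Subgroup.map_commutator, Subgroup.map_top_of_surjective π hsurj,
            map_pPow]
      _ = ⁅H.map π, (⊤ : Subgroup (G ⧸ X))⁆ ⊔ pPow p (H.map π) := by rw [bot_sup_eq]
  rw [Subgroup.map_eq_bot_iff, QuotientGroup.ker_mk'] at hmain
  exact hmain

/-- DDMS Lemma 2.4 : in a powerful finite `p`-group (`p` odd), `G^p` is powerfully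
embedded: `[G^p, G] ≤ (G^p)^p`. -/
lemma powerfully_embedded {p : ℕ} (hp : p.Prime) (hodd : Odd p)
    {G : Type*} [Group G] [Finite G] (hG : IsPGroup p G)
    (hpow : Powerful p G) :
    ⁅pPow p (⊤ : Subgroup G), (⊤ : Subgroup G)⁆ ≤ pPow p (pPow p (⊤ : Subgroup G)) := by
  set K := pPow p (⊤ : Subgroup G) with hK
  haveI hKn : K.Normal := pPow_normal p ⊤ inferInstance
  set H := ⁅K, (⊤ : Subgroup G)⁆ with hH
  haveI hHn : H.Normal := Subgroup.commutator_normal K ⊤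
  set X := pPow p K with hX
  haveI hXn : X.Normal := pPow_normal p K hKn
  haveI : (pPow p H).Normal := pPow_normal p H hHn
  haveI : (⁅H, (⊤ : Subgroup G)⁆).Normal := Subgroup.commutator_normal H ⊤
  refine le_of_le_sup_commutator_sup_pPow hp hG H X hHn hXn ?_
  set M := X ⊔ ⁅H, (⊤ : Subgroup G)⁆ ⊔ pPow p H with hM
  haveI hMn : M.Normal := by
    rw [hM]
    exact Subgroup.sup_normal _ _
  set π := QuotientGroup.mk' M with hπ
  have hsurj : Surjective π := QuotientGroup.mk'_surjective M
  have hmapM : M.map π = ⊥ := by rw [Subgroup.map_eq_bot_iff, QuotientGroup.ker_mk']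
  have hXbot : X.map π = ⊥ := by
    rw [Subgroup.map_eq_bot_iff, QuotientGroup.ker_mk']
    exact le_sup_of_le_left (le_sup_of_le_left le_rfl)
  have hHcbot : (⁅H, (⊤ : Subgroup G)⁆).map π = ⊥ := by
    rw [Subgroup.map_eq_bot_iff, QuotientGroup.ker_mk']
    exact le_sup_of_le_left (le_sup_of_le_right le_rfl)
  have hHpbot : (pPow p H).map π = ⊥ := by
    rw [Subgroup.map_eq_bot_iff, QuotientGroup.ker_mk']
    exact le_sup_right
  -- transfer facts to the quotient
  have hKmap : K.map π = pPow p (⊤ : Subgroup (G ⧸ M)) := by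
    rw [hK, map_pPow, Subgroup.map_top_of_surjective π hsurj]
  have hQpow : Powerful p (G ⧸ M) := powerful_map p π hsurj hpow
  -- key claim : p-th powers are central in the quotient
  have hcentral : ∀ a g : G ⧸ M, ⁅a ^ p, g⁆ = 1 := by
    intro a g
    have hcK : ⁅a, g⁆ ∈ pPow p (⊤ : Subgroup (G ⧸ M)) :=
      hQpow (Subgroup.commutator_mem_commutator (Subgroup.mem_top a) (Subgroup.mem_top g))
    have hcp : ⁅a, g⁆ ^ p = 1 := by
      have h1 : ⁅a, g⁆ ^ p ∈ pPow p (pPow p (⊤ : Subgroup (G ⧸ M))) := pow_mem_pPow p hcK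
      rw [← hKmap, ← map_pPow, ← hX, hXbot, Subgroup.mem_bot] at h1
      exact h1
    have hdH : ⁅a, ⁅a, g⁆⁆ ∈ H.map π := by
      have : ⁅a, ⁅a, g⁆⁆ ∈ ⁅(⊤ : Subgroup (G ⧸ M)), pPow p ⊤⁆ :=
        Subgroup.commutator_mem_commutator (Subgroup.mem_top a) hcK
      rw [Subgroup.commutator_comm, ← hKmap, ← Subgroup.map_top_of_surjective π hsurj,
        ← Subgroup.map_commutator, ← hH] at this
      exact this
    have hd : ∀ z : G ⧸ M, Commute ⁅a, ⁅a, g⁆⁆ z := by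
      intro z
      have hz : ⁅⁅a, ⁅a, g⁆⁆, z⁆ ∈ ⁅H.map π, (⊤ : Subgroup (G ⧸ M))⁆ :=
        Subgroup.commutator_mem_commutator hdH (Subgroup.mem_top z)
      rw [← Subgroup.map_top_of_surjective π hsurj, ← Subgroup.map_commutator, hHcbot,
        Subgroup.mem_bot] at hz
      exact commutatorElement_eq_one_iff_commute.mp hz
    have hdp : ⁅a, ⁅a, g⁆⁆ ^ p = 1 := by
      have h1 : ⁅a, ⁅a, g⁆⁆ ^ p ∈ pPow p (H.map π) := pow_mem_pPow p hdH
      rw [← map_pPow, hHpbot, Subgroup.mem_bot] at h1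
      exact h1
    exact commutator_pow_eq_one hodd a g hd hcp hdp
  -- hence the image of H is trivial
  have hHmap : H.map π = ⊥ := by
    rw [hH, Subgroup.map_commutator, Subgroup.map_top_of_surjective π hsurj, eq_bot_iff,
      Subgroup.commutator_le]
    intro k hk g _
    rw [Subgroup.mem_bot]
    rw [hKmap] at hk
    refine Subgroup.closure_induction
      (p := fun x _ => ⁅x, g⁆ = 1) ?_ ?_ ?_ ?_ hk
    · rintro _ ⟨b, -, rfl⟩
      exact hcentral b g
    · exact commutatorElement_eq_one_iff_commute.mpr (Commute.one_left g)
    · intro x y hx hy ihx ihy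
      exact commutatorElement_eq_one_iff_commute.mpr
        (((commutatorElement_eq_one_iff_commute.mp ihx).mul_left
          (commutatorElement_eq_one_iff_commute.mp ihy)))
    · intro x hx ihx
      exact commutatorElement_eq_one_iff_commute.mpr
        ((commutatorElement_eq_one_iff_commute.mp ihx).inv_left)
  rw [Subgroup.map_eq_bot_iff, QuotientGroup.ker_mk'] at hHmap
  exact hHmap


/-- Every element of `G^p` is a `p`-th power modulo `(G^p)^p`. -/
lemma exists_pow_mul_mem {p : ℕ} (hp : p.Prime) (hodd : Odd p)
    {G : Type*} [Group G] [Finite G] (hG : IsPGroup p G) (hpow : Powerful p G) :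
    ∀ x ∈ pPow p (⊤ : Subgroup G), ∃ y z : G,
      z ∈ pPow p (pPow p (⊤ : Subgroup G)) ∧ x = y ^ p * z := by
  set K := pPow p (⊤ : Subgroup G) with hK
  haveI hKn : K.Normal := pPow_normal p ⊤ inferInstance
  set X := pPow p K with hX
  haveI hXn : X.Normal := pPow_normal p K hKn
  set π := QuotientGroup.mk' X with hπ
  have hsurj : Surjective π := QuotientGroup.mk'_surjective X
  have hXbot : X.map π = ⊥ := by rw [Subgroup.map_eq_bot_iff, QuotientGroup.ker_mk']
  have hKmap : K.map π = pPow p (⊤ : Subgroup (G ⧸ X)) := by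
    rw [hK, map_pPow, Subgroup.map_top_of_surjective π hsurj]
  have hQpow : Powerful p (G ⧸ X) := powerful_map p π hsurj hpow
  have hHbot : (⁅K, (⊤ : Subgroup G)⁆).map π = ⊥ := by
    rw [Subgroup.map_eq_bot_iff, QuotientGroup.ker_mk']
    exact powerfully_embedded hp hodd hG hpow
  -- p-th power map is multiplicative on the quotient
  have hmul : ∀ x y : G ⧸ X, (x * y) ^ p = x ^ p * y ^ p := by
    intro x y
    have hcK : ⁅y, x⁆ ∈ pPow p (⊤ : Subgroup (G ⧸ X)) :=
      hQpow (Subgroup.commutator_mem_commutator (Subgroup.mem_top y) (Subgroup.mem_top x))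
    refine mul_pow_of_commutator hodd x y ?_ ?_
    · intro z
      have hz : ⁅⁅y, x⁆, z⁆ ∈ ⁅pPow p (⊤ : Subgroup (G ⧸ X)), ⊤⁆ :=
        Subgroup.commutator_mem_commutator hcK (Subgroup.mem_top z)
      rw [← hKmap, ← Subgroup.map_top_of_surjective π hsurj, ← Subgroup.map_commutator,
        hHbot, Subgroup.mem_bot] at hz
      exact commutatorElement_eq_one_iff_commute.mp hz
    · have h1 : ⁅y, x⁆ ^ p ∈ pPow p (pPow p (⊤ : Subgroup (G ⧸ X))) := pow_mem_pPow p hcK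
      rw [← hKmap, ← map_pPow, ← hX, hXbot, Subgroup.mem_bot] at h1
      exact h1
  intro x hx
  set φ : G ⧸ X →* G ⧸ X := MonoidHom.mk' (fun q => q ^ p) (fun a b => hmul a b) with hφ
  have hrange : pPow p (⊤ : Subgroup (G ⧸ X)) ≤ φ.range := by
    rw [pPow, Subgroup.closure_le]
    rintro _ ⟨g, -, rfl⟩
    exact ⟨g, rfl⟩
  have hxQ : π x ∈ pPow p (⊤ : Subgroup (G ⧸ X)) := by
    rw [← hKmap]
    exact Subgroup.mem_map_of_mem π hx
  obtain ⟨yb, hyb⟩ := hrange hxQ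
  obtain ⟨y, rfl⟩ := hsurj yb
  refine ⟨y, (y ^ p)⁻¹ * x, ?_, by group⟩
  have h1 : π ((y ^ p)⁻¹ * x) = 1 := by
    have : (π y) ^ p = π x := hyb
    rw [map_mul, map_inv, map_pow, this]
    group
  rw [← QuotientGroup.ker_mk' X, MonoidHom.mem_ker]
  exact h1

/-- `G^p` is contained in every maximal subgroup of a finite `p`-group. -/
lemma pPow_le_coatom {p : ℕ} (hp : p.Prime)
    {G : Type*} [Group G] [Finite G] (hG : IsPGroup p G)
    {M : Subgroup G} (hM : IsCoatom M) : pPow p (⊤ : Subgroup G) ≤ M := by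
  haveI : Fact p.Prime := ⟨hp⟩
  haveI : Group.IsNilpotent G := hG.isNilpotent
  have hnc : NormalizerCondition G := normalizerCondition_of_isNilpotent
  haveI hnorm : M.Normal := NormalizerCondition.normal_of_coatom M hnc hM
  set π := QuotientGroup.mk' M with hπ
  have hsurj : Surjective π := QuotientGroup.mk'_surjective M
  have hsimple : ∀ B : Subgroup (G ⧸ M), B = ⊥ ∨ B = ⊤ := by
    intro B
    have hcom : M ≤ B.comap π := by
      intro m hm
      rw [Subgroup.mem_comap]
      have : π m = 1 := by
        rw [← QuotientGroup.ker_mk' M, MonoidHom.mem_ker] at hm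
        exact hm
      rw [this]
      exact B.one_mem
    rcases eq_or_lt_of_le hcom with h | h
    · left
      rw [← Subgroup.map_comap_eq_self_of_surjective hsurj B, ← h,
        Subgroup.map_eq_bot_iff, QuotientGroup.ker_mk']
    · right
      have htop : B.comap π = ⊤ := hM.2 _ h
      rw [← Subgroup.map_comap_eq_self_of_surjective hsurj B, htop,
        Subgroup.map_top_of_surjective π hsurj]
  rw [pPow, Subgroup.closure_le]
  rintro _ ⟨g, -, rfl⟩
  have hgp : π (g ^ p) = (π g) ^ p := by rw [map_pow]
  have : (π g) ^ p = 1 := by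
    by_cases hg1 : π g = 1
    · rw [hg1, one_pow]
    · rcases hsimple (Subgroup.zpowers ((π g) ^ p)) with hB | hB
      · have := Subgroup.mem_zpowers ((π g) ^ p)
        rw [hB, Subgroup.mem_bot] at this
        exact this
      · exfalso
        have hgmem : π g ∈ Subgroup.zpowers ((π g) ^ p) := by rw [hB]; trivial
        obtain ⟨m, hm⟩ := hgmem
        -- (π g ^ p) ^ m = π g
        have hzp : (π g) ^ ((p : ℤ) * m - 1) = 1 := by
          have h1 : ((π g) ^ (p : ℤ)) ^ m = π g := by
            rw [zpow_natCast]; exact hm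
          rw [zpow_sub, zpow_mul, h1, zpow_one, mul_inv_cancel]
        have hdvd : ((orderOf (π g) : ℤ)) ∣ ((p : ℤ) * m - 1) :=
          orderOf_dvd_iff_zpow_eq_one.mpr hzp
        obtain ⟨k, hk⟩ := hG.to_quotient M (π g)
        have hodvd : orderOf (π g) ∣ p ^ k := orderOf_dvd_of_pow_eq_one hk
        obtain ⟨j, hjk, hj⟩ := (Nat.dvd_prime_pow hp).mp hodvd
        have hj0 : j ≠ 0 := by
          intro h0
          rw [h0, pow_zero] at hj
          exact hg1 (orderOf_eq_one_iff.mp hj)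
        have hpdvd : (p : ℤ) ∣ (orderOf (π g) : ℤ) := by
          rw [hj]
          exact_mod_cast dvd_pow_self p hj0
        have : (p : ℤ) ∣ 1 := by
          have hd : (p : ℤ) ∣ (p : ℤ) * m - 1 := hpdvd.trans hdvd
          have hd2 : (p : ℤ) ∣ (p : ℤ) * m := Dvd.intro m rfl
          have h3 := dvd_sub hd2 hd
          simpa using h3
        have := Int.le_of_dvd one_pos this
        have hp2 := hp.two_le
        omega
  have hfin : π (g ^ p) = 1 := by rw [hgp, this]
  show g ^ p ∈ M
  rw [← QuotientGroup.ker_mk' M, MonoidHom.mem_ker]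
  exact hfin


/-- In a cyclic group, every element of `G^p` is a `p`-th power. -/
lemma cyclic_case {p : ℕ} {G : Type*} [Group G] {y : G}
    (h : Subgroup.closure ({y} : Set G) = ⊤) :
    ∀ x ∈ pPow p (⊤ : Subgroup G), ∃ w : G, w ^ p = x := by
  intro x hx
  set T : Subgroup G :=
    { carrier := {x | ∃ n : ℤ, (y ^ n) ^ p = x}
      one_mem' := ⟨0, by simp⟩
      mul_mem' := by
        rintro _ _ ⟨n, rfl⟩ ⟨m, rfl⟩
        refine ⟨n + m, ?_⟩
        simp only [← zpow_natCast, ← zpow_mul, ← zpow_add]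
        ring_nf
      inv_mem' := by
        rintro _ ⟨n, rfl⟩
        refine ⟨-n, ?_⟩
        simp only [← zpow_natCast, ← zpow_mul, ← zpow_neg]
        ring_nf } with hT
  have hle : pPow p (⊤ : Subgroup G) ≤ T := by
    rw [pPow, Subgroup.closure_le]
    rintro _ ⟨g, -, rfl⟩
    have hg : g ∈ Subgroup.closure ({y} : Set G) := by rw [h]; trivial
    obtain ⟨n, rfl⟩ := Subgroup.mem_closure_singleton.mp hg
    exact ⟨n, rfl⟩
  obtain ⟨n, hn⟩ := hle hx
  exact ⟨y ^ n, hn⟩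

lemma card_lt_of_ne_top {G : Type*} [Group G] [Finite G] {K : Subgroup G} (h : K ≠ ⊤) :
    Nat.card K < Nat.card G := by
  have h1 : Nat.card K = (K : Set G).ncard := Nat.card_coe_set_eq _
  have h2 : (Set.univ : Set G).ncard = Nat.card G := Set.ncard_univ G
  rw [h1, ← h2]
  refine Set.ncard_lt_ncard ?_ (Set.finite_univ)
  refine ⟨Set.subset_univ _, ?_⟩
  intro hsub
  apply h
  rw [eq_top_iff]
  intro g _
  exact hsub (Set.mem_univ g)

/-- Commutators from `⟨y⟩ ⊔ G^p` land in `(G^p)^p`. -/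
lemma commutator_sub_le {p : ℕ} (hp : p.Prime) (hodd : Odd p)
    {G : Type*} [Group G] [Finite G] (hG : IsPGroup p G) (hpow : Powerful p G) (y : G) :
    ⁅Subgroup.closure ({y} : Set G) ⊔ pPow p (⊤ : Subgroup G),
     Subgroup.closure ({y} : Set G) ⊔ pPow p (⊤ : Subgroup G)⁆ ≤
      pPow p (pPow p (⊤ : Subgroup G)) := by
  set K := pPow p (⊤ : Subgroup G) with hK
  haveI hKn : K.Normal := pPow_normal p ⊤ inferInstance
  set X := pPow p K with hX
  haveI hXn : X.Normal := pPow_normal p K hKn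
  set π := QuotientGroup.mk' X with hπ
  have hsurj : Surjective π := QuotientGroup.mk'_surjective X
  have hHbot : (⁅K, (⊤ : Subgroup G)⁆).map π = ⊥ := by
    rw [Subgroup.map_eq_bot_iff, QuotientGroup.ker_mk']
    exact powerfully_embedded hp hodd hG hpow
  have hcent : ∀ k ∈ K, ∀ z : G ⧸ X, Commute (π k) z := by
    intro k hk z
    have hz : ⁅π k, z⁆ ∈ ⁅K.map π, (⊤ : Subgroup (G ⧸ X))⁆ :=
      Subgroup.commutator_mem_commutator (Subgroup.mem_map_of_mem π hk) (Subgroup.mem_top z)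
    rw [← Subgroup.map_top_of_surjective π hsurj, ← Subgroup.map_commutator, hHbot,
      Subgroup.mem_bot] at hz
    exact commutatorElement_eq_one_iff_commute.mp hz
  have hdecomp : ∀ g ∈ Subgroup.closure ({y} : Set G) ⊔ K,
      ∃ n : ℤ, ∃ k ∈ K, g = y ^ n * k := by
    intro g hg
    have hmem : g ∈ ((Subgroup.closure ({y} : Set G) : Set G) * (K : Set G)) := by
      rw [← Subgroup.mul_normal]
      exact hg
    obtain ⟨a, ha, k, hk, hak⟩ := hmem
    obtain ⟨n, rfl⟩ := Subgroup.mem_closure_singleton.mp ha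
    exact ⟨n, k, hk, hak.symm⟩
  rw [Subgroup.commutator_le]
  intro g₁ h₁ g₂ h₂
  obtain ⟨n₁, k₁, hk₁, rfl⟩ := hdecomp g₁ h₁
  obtain ⟨n₂, k₂, hk₂, rfl⟩ := hdecomp g₂ h₂
  have hcomm : Commute (π (y ^ n₁ * k₁)) (π (y ^ n₂ * k₂)) := by
    rw [map_mul, map_mul]
    have hyy : Commute (π (y ^ n₁)) (π (y ^ n₂)) := by
      rw [map_zpow, map_zpow]
      exact (Commute.refl (π y)).zpow_zpow n₁ n₂
    exact ((hyy.mul_right (hcent k₂ hk₂ _).symm).mul_left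
      (((hcent k₁ hk₁ _)).mul_right ((hcent k₁ hk₁ _))))
  have h1 : π ⁅y ^ n₁ * k₁, y ^ n₂ * k₂⁆ = 1 := by
    rw [map_commutatorElement]
    exact commutatorElement_eq_one_iff_commute.mpr hcomm
  show ⁅y ^ n₁ * k₁, y ^ n₂ * k₂⁆ ∈ X
  rw [← QuotientGroup.ker_mk' X, MonoidHom.mem_ker]
  exact h1


universe u

/-- Main induction: in a powerful finite `p`-group, every element of `G^p` is a `p`-th power. -/
lemma main_aux {p : ℕ} (hp : p.Prime) (hodd : Odd p) :
    ∀ (n : ℕ) (G : Type u) [Group G] [Finite G], Nat.card G ≤ n → IsPGroup p G →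
      Powerful p G → ∀ x ∈ pPow p (⊤ : Subgroup G), ∃ w : G, w ^ p = x := by
  intro n
  induction n with
  | zero =>
    intro G _ _ hcard
    have := Nat.card_pos (α := G)
    omega
  | succ n ih =>
    intro G _ _ hcard hG hpow x hx
    set K := pPow p (⊤ : Subgroup G) with hK
    obtain ⟨y, z, hz, rfl⟩ := exists_pow_mul_mem hp hodd hG hpow x hx
    by_cases htop : Subgroup.closure ({y} : Set G) ⊔ K = ⊤
    · have hyt : Subgroup.closure ({y} : Set G) = ⊤ := by
        by_contra hne
        rcases (eq_top_or_exists_le_coatom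
          (Subgroup.closure ({y} : Set G))).resolve_left hne with ⟨M, hM, hle⟩
        have hKM : K ≤ M := pPow_le_coatom hp hG hM
        have htle : (⊤ : Subgroup G) ≤ M := by rw [← htop]; exact sup_le hle hKM
        exact hM.1 (top_le_iff.mp htle)
      exact cyclic_case hyt _
        (mul_mem (pow_mem_pPow p (Subgroup.mem_top y)) (pPow_le_self p K hz))
    · set Hs := Subgroup.closure ({y} : Set G) ⊔ K with hHs
      have hcard' : Nat.card Hs ≤ n := by
        have := card_lt_of_ne_top (K := Hs) htop
        omega
      have hmapP : pPow p Hs = (pPow p (⊤ : Subgroup Hs)).map Hs.subtype := pPow_eq_map p Hs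
      have hpowHs : Powerful p Hs := by
        rw [Powerful, ← Subgroup.map_le_map_iff_of_injective Hs.subtype_injective,
          Subgroup.map_commutator, ← MonoidHom.range_eq_map, Subgroup.range_subtype, ← hmapP]
        calc ⁅Hs, Hs⁆ ≤ pPow p (pPow p (⊤ : Subgroup G)) := commutator_sub_le hp hodd hG hpow y
          _ ≤ pPow p Hs := pPow_mono p le_sup_right
      have hxHs : y ^ p * z ∈ pPow p Hs := by
        have hy : y ∈ Hs := by
          rw [hHs]
          exact (le_sup_left : Subgroup.closure ({y} : Set G) ≤ _) (Subgroup.subset_closure (Set.mem_singleton y))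
        exact mul_mem (pow_mem_pPow p hy) (pPow_mono p le_sup_right hz)
      rw [hmapP] at hxHs
      obtain ⟨w, hw, hwx⟩ := hxHs
      obtain ⟨v, hv⟩ := ih Hs hcard' (hG.to_subgroup Hs) hpowHs w hw
      refine ⟨(v : G), ?_⟩
      rw [← hwx, ← hv]
      rfl

end PowerfulAux

/-- In a powerful finite `p`-group (`p` odd), every element of `G^p` is a
`p`-th power. -/
theorem powerful_mem_pPow_is_pth_power
    (p : ℕ) (hp : p.Prime) (hodd : Odd p)
    (G : Type*) [Group G] [Finite G] (hpG : IsPGroup p G)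
    (hpow : ⁅(⊤ : Subgroup G), (⊤ : Subgroup G)⁆ ≤ Subgroup.closure {x : G | ∃ g : G, g ^ p = x}) :
    ∀ x ∈ Subgroup.closure {x : G | ∃ g : G, g ^ p = x}, ∃ y : G, y ^ p = x := by
  have hset : {x : G | ∃ g : G, g ^ p = x} =
      (fun g => g ^ p) '' ((⊤ : Subgroup G) : Set G) := by
    ext t
    simp [Set.mem_image]
  intro x hx
  rw [hset] at hx hpow
  exact PowerfulAux.main_aux hp hodd (Nat.card G) G le_rfl hpG hpow x hx
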